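/- arXiv:1403.2165 — 2 statements merged into one kernel-verified Lean document; each statement's English description precedes it below -/
import Mathlib

section
/- For every σ ∈ S_n with B-code B(σ) = (b_1,…,b_n), the sorting index satisfies sor(σ) = Σ_{i=1}^{n} (i − b_i). -/
open scoped Classical

namespace SortIdx

variable {n : ℕ}

noncomputable section

/-- The inversion number `inv σ := #{(i,j) : i < j ∧ σ i > σ j}`. -/
def inv (σ : Equiv.Perm (Fin n)) : ℕ :=
  (Finset.univ.filter (fun p : Fin n × Fin n => p.1 < p.2 ∧ σ p.2 < σ p.1)).card

/-- The inversion set `Inv σ := {(i,j) : i < j ∧ σ i > σ j}`. -/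
def InvSet (σ : Equiv.Perm (Fin n)) : Finset (Fin n × Fin n) :=
  Finset.univ.filter (fun p : Fin n × Fin n => p.1 < p.2 ∧ σ p.2 < σ p.1)

/-- Right-to-left minimum letters. -/
def RmilSet (σ : Equiv.Perm (Fin n)) : Finset (Fin n) :=
  (Finset.univ.filter (fun i => ∀ j, i < j → σ i < σ j)).image σ

/-- The number of right-to-left minima. -/
def rmin (σ : Equiv.Perm (Fin n)) : ℕ := (RmilSet σ).card

/-- Right-to-left minimum places. -/
def RmipSet (σ : Equiv.Perm (Fin n)) : Finset (Fin n) :=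
  Finset.univ.filter (fun i => ∀ j, i < j → σ i < σ j)

/-- Right-to-left maximum letters. -/
def RmalSet (σ : Equiv.Perm (Fin n)) : Finset (Fin n) :=
  (Finset.univ.filter (fun i => ∀ j, i < j → σ j < σ i)).image σ

/-- The number of right-to-left maxima. -/
def rmax (σ : Equiv.Perm (Fin n)) : ℕ := (RmalSet σ).card

/-- Left-to-right minimum letters. -/
def LmilSet (σ : Equiv.Perm (Fin n)) : Finset (Fin n) :=
  (Finset.univ.filter (fun i => ∀ j, j < i → σ i < σ j)).image σ

/-- The number of left-to-right minima. -/
def lmin (σ : Equiv.Perm (Fin n)) : ℕ := (LmilSet σ).card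

/-- Left-to-right minimum places. -/
def LmipSet (σ : Equiv.Perm (Fin n)) : Finset (Fin n) :=
  Finset.univ.filter (fun i => ∀ j, j < i → σ i < σ j)

/-- Left-to-right maximum letters. -/
def LmalSet (σ : Equiv.Perm (Fin n)) : Finset (Fin n) :=
  (Finset.univ.filter (fun i => ∀ j, j < i → σ j < σ i)).image σ

/-- The number of left-to-right maxima. -/
def lmax (σ : Equiv.Perm (Fin n)) : ℕ := (LmalSet σ).card

/-- Left-to-right maximum places. -/
def LmapSet (σ : Equiv.Perm (Fin n)) : Finset (Fin n) :=
  Finset.univ.filter (fun i => ∀ j, j < i → σ j < σ i)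

/-- `Cyc σ`: the set of smallest elements of the cycles of `σ`
(`i` is smallest in its cycle iff `i ≤ σ^k i` for all `k`). -/
def CycSet (σ : Equiv.Perm (Fin n)) : Finset (Fin n) :=
  Finset.univ.filter (fun i => ∀ k : ℕ, i ≤ (σ ^ k) i)

/-- The number of cycles of `σ` (fixed points included). -/
def cyc (σ : Equiv.Perm (Fin n)) : ℕ := (CycSet σ).card

/-- One step of the sorting process computing the sorting index: repeatedly
put the largest not-yet-fixed letter `j` in its place by the transposition
`(i j)` where `i = σ⁻¹ j` is the place of the letter `j`, recording the
distance `j - i`.  This produces the unique factorization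
`σ = (i₁ j₁)(i₂ j₂)⋯(i_k j_k)` with `j₁ < ⋯ < j_k`, `i_r < j_r`, and sums
the `j_r - i_r`.  The fuel `n` is always sufficient. -/
def sorAux : ℕ → Equiv.Perm (Fin n) → ℕ
  | 0, _ => 0
  | (fuel + 1), σ =>
    if h : σ.support.Nonempty then
      (((σ.support.max' h : Fin n) : ℕ) - ((σ⁻¹ (σ.support.max' h) : Fin n) : ℕ)) +
        sorAux fuel (σ * Equiv.swap (σ⁻¹ (σ.support.max' h)) (σ.support.max' h))
    else 0

/-- The sorting index of Petersen. -/
def sor (σ : Equiv.Perm (Fin n)) : ℕ := sorAux n σ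

theorem bcode_exists (σ : Equiv.Perm (Fin n)) (i : Fin n) :
    ∃ k : ℕ, 0 < k ∧ (σ⁻¹ ^ k) i ≤ i := by
  refine ⟨orderOf σ⁻¹, orderOf_pos σ⁻¹, ?_⟩
  rw [pow_orderOf_eq_one]
  simp

/-- The `B`-code of `σ`: `Bcode σ i = σ^(-k) i` where `k ≥ 1` is minimal with
`σ^(-k) i ≤ i`. -/
def Bcode (σ : Equiv.Perm (Fin n)) (i : Fin n) : Fin n :=
  (σ⁻¹ ^ (Nat.find (bcode_exists σ i))) i

/-- The `B`-code as a sequence in `L_n` (1-indexed values: the entry at place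
`i` is the 1-indexed name of the letter `Bcode σ i`). -/
def BcodeNat (σ : Equiv.Perm (Fin n)) : Fin n → ℕ :=
  fun i => ((Bcode σ i : Fin n) : ℕ) + 1

/-- The Lehmer code: `Leh σ i = #{j : j ≤ i ∧ σ j ≤ σ i}` (1-indexed values). -/
def Leh (σ : Equiv.Perm (Fin n)) : Fin n → ℕ :=
  fun i => (Finset.univ.filter (fun j => j ≤ i ∧ σ j ≤ σ i)).card

/-- The `A`-code: `A σ := Leh σ⁻¹`. -/
def Acode (σ : Equiv.Perm (Fin n)) : Fin n → ℕ := Leh σ⁻¹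

/-- `O(code) := {i : code i = 1}` (for `1`-indexed codes in `L_n`). -/
def Oset (code : Fin n → ℕ) : Finset (Fin n) :=
  Finset.univ.filter (fun i => code i = 1)

/-- `Lmic1 σ := O(B σ)`, the set of places where the `B`-code equals `1`,
equivalently the left-to-right minima of the shifted cycle containing `1`. -/
def Lmic1Set (σ : Equiv.Perm (Fin n)) : Finset (Fin n) :=
  Oset (BcodeNat σ)

/-- `lmic1 σ := #{i : (B σ)_i = 1}`. -/
def lmic1 (σ : Equiv.Perm (Fin n)) : ℕ := (Lmic1Set σ).card

/-- The bijection `φ = B⁻¹ ∘ A` of Foata–Han. -/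
def phi (σ : Equiv.Perm (Fin n)) : Equiv.Perm (Fin n) :=
  Function.invFun BcodeNat (Acode σ)

/-- The algorithm computing the induced set of a code: the list argument is
the list of places still to process (from the last to the first), `S` is the
set of letters still available.  At place `i` we pick the `(code i)`-th
smallest element `l` of `S` (1-indexed), put the pairs `(l, j)` for `j ∈ S`,
`j > l` into the answer and remove `l` from `S`. -/
def inducedAux : List (Fin n) → Finset (Fin n) → (Fin n → ℕ) → Finset (Fin n × Fin n)
  | [], _, _ => ∅
  | (i :: is), S, code =>
      ((S.filter (fun j => (S.sort (· ≤ ·)).getD (code i - 1) i < j)).image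
          (fun j => ((S.sort (· ≤ ·)).getD (code i - 1) i, j))) ∪
        inducedAux is (S.erase ((S.sort (· ≤ ·)).getD (code i - 1) i)) code

/-- The induced set `⟨code⟩` of a code in `L_n`. -/
def induced (code : Fin n → ℕ) : Finset (Fin n × Fin n) :=
  inducedAux (List.finRange n).reverse Finset.univ code

/-- The sorting set `Sor σ := ⟨B σ⟩`. -/
def SorSet (σ : Equiv.Perm (Fin n)) : Finset (Fin n × Fin n) :=
  induced (BcodeNat σ)

/-- The descent set (as a set of places `i`, `0`-indexed, such that
`σ i > σ (i+1)`). -/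
def DesSet (σ : Equiv.Perm (Fin n)) : Finset (Fin n) :=
  Finset.univ.filter (fun i => ∃ h : (i : ℕ) + 1 < n, σ ⟨(i : ℕ) + 1, h⟩ < σ i)

/-- The major index (descents being counted `1`-indexed). -/
def maj (σ : Equiv.Perm (Fin n)) : ℕ :=
  ∑ i ∈ DesSet σ, ((i : ℕ) + 1)

/-- The charge `chg σ := ∑_{i ∈ Des σ⁻¹} (n - i)` (descents `1`-indexed). -/
def chg (σ : Equiv.Perm (Fin n)) : ℕ :=
  ∑ i ∈ DesSet σ⁻¹, (n - ((i : ℕ) + 1))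

/-- The reverse-complement of `σ` : `τ i = n + 1 - σ (n + 1 - i)` (1-indexed). -/
def revcomp (σ : Equiv.Perm (Fin n)) : Equiv.Perm (Fin n) :=
  Fin.revPerm * σ * Fin.revPerm

/-- The reverse major index `rmaj σ := maj (revcomp σ)`. -/
def rmaj (σ : Equiv.Perm (Fin n)) : ℕ := maj (revcomp σ)

end

end SortIdx
namespace SortIdx

section Helpers
variable {n : ℕ}

lemma bcode_find_pos (σ : Equiv.Perm (Fin n)) (i : Fin n) :
    0 < Nat.find (bcode_exists σ i) := (Nat.find_spec (bcode_exists σ i)).1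

lemma bcode_le (σ : Equiv.Perm (Fin n)) (i : Fin n) : Bcode σ i ≤ i :=
  (Nat.find_spec (bcode_exists σ i)).2

lemma bcode_min (σ : Equiv.Perm (Fin n)) (i : Fin n) {t : ℕ} (ht : 0 < t)
    (ht2 : t < Nat.find (bcode_exists σ i)) : i < (σ⁻¹ ^ t) i := by
  have h := Nat.find_min (bcode_exists σ i) ht2
  push_neg at h
  exact h ht

lemma bcode_find_eq (σ : Equiv.Perm (Fin n)) (i : Fin n) (k : ℕ) (hk : 0 < k)
    (hle : (σ⁻¹ ^ k) i ≤ i) (hmin : ∀ t, 0 < t → t < k → i < (σ⁻¹ ^ t) i) :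
    Nat.find (bcode_exists σ i) = k := by
  rw [Nat.find_eq_iff]
  refine ⟨⟨hk, hle⟩, fun t ht => ?_⟩
  rintro ⟨h0, hle'⟩
  exact absurd hle' (not_le.mpr (hmin t h0 ht))

lemma bcode_eq_of (σ : Equiv.Perm (Fin n)) (i : Fin n) (k : ℕ) (hk : 0 < k)
    (hle : (σ⁻¹ ^ k) i ≤ i) (hmin : ∀ t, 0 < t → t < k → i < (σ⁻¹ ^ t) i) :
    Bcode σ i = (σ⁻¹ ^ k) i := by
  rw [Bcode, bcode_find_eq σ i k hk hle hmin]

lemma bcode_fixed (σ : Equiv.Perm (Fin n)) (i : Fin n) (h : σ i = i) :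
    Bcode σ i = i := by
  have h1 : σ⁻¹ i = i := by
    conv_lhs => rw [← h]
    simp
  have := bcode_eq_of σ i 1 one_pos (by simpa [h1]) (by omega)
  simpa [h1] using this

lemma swap_mul_inv_apply (σ : Equiv.Perm (Fin n)) (a m x : Fin n) :
    (σ * Equiv.swap a m)⁻¹ x = Equiv.swap a m (σ⁻¹ x) := by
  rw [mul_inv_rev, Equiv.swap_inv, Equiv.Perm.mul_apply]

lemma orbitA (σ : Equiv.Perm (Fin n)) (m i : Fin n) (him : i ≠ m) :
    ∀ t : ℕ, (∀ u, 1 ≤ u → u ≤ t → (σ⁻¹ ^ u) i ≠ m) →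
      ((σ * Equiv.swap (σ⁻¹ m) m)⁻¹ ^ t) i = (σ⁻¹ ^ t) i := by
  intro t
  induction t with
  | zero => simp
  | succ t ih =>
    intro h
    have ih' := ih (fun u h1 h2 => h u h1 (h2.trans (Nat.le_succ t)))
    rw [pow_succ', Equiv.Perm.mul_apply, ih', swap_mul_inv_apply]
    have h2 : σ⁻¹ ((σ⁻¹ ^ t) i) = (σ⁻¹ ^ (t+1)) i := by
      rw [pow_succ', Equiv.Perm.mul_apply]
    rw [h2]
    apply Equiv.swap_apply_of_ne_of_ne
    · intro hc
      have : (σ⁻¹ ^ t) i = m := by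
        have := σ⁻¹.injective (by rw [h2, hc] : σ⁻¹ ((σ⁻¹ ^ t) i) = σ⁻¹ m)
        exact this
      rcases Nat.eq_zero_or_pos t with ht | ht
      · subst ht; simp at this; exact him this
      · exact h t ht (Nat.le_succ t) this
    · exact h (t+1) (Nat.succ_le_succ (Nat.zero_le t)) le_rfl

lemma orbitB (σ : Equiv.Perm (Fin n)) (m i : Fin n) (him : i ≠ m) (s : ℕ)
    (hs : (σ⁻¹ ^ (s+1)) i = m) (hsmin : ∀ u, 1 ≤ u → u ≤ s → (σ⁻¹ ^ u) i ≠ m) :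
    ∀ t, s + 1 ≤ t → (∀ u, s + 1 < u → u ≤ t + 1 → (σ⁻¹ ^ u) i ≠ m) →
      ((σ * Equiv.swap (σ⁻¹ m) m)⁻¹ ^ t) i = (σ⁻¹ ^ (t+1)) i := by
  intro t ht
  induction t, ht using Nat.le_induction with
  | base =>
    intro _
    have hA := orbitA σ m i him s hsmin
    rw [pow_succ', Equiv.Perm.mul_apply, hA, swap_mul_inv_apply]
    have h2 : σ⁻¹ ((σ⁻¹ ^ s) i) = (σ⁻¹ ^ (s+1)) i := by
      rw [pow_succ', Equiv.Perm.mul_apply]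
    rw [h2, hs, Equiv.swap_apply_right]
    rw [pow_succ' σ⁻¹ (s+1), Equiv.Perm.mul_apply, hs]
  | succ t ht ih =>
    intro h
    have ih' := ih (fun u h1 h2 => h u h1 (h2.trans (Nat.le_succ (t+1))))
    rw [pow_succ', Equiv.Perm.mul_apply, ih', swap_mul_inv_apply]
    have h2 : σ⁻¹ ((σ⁻¹ ^ (t+1)) i) = (σ⁻¹ ^ (t+2)) i := by
      rw [pow_succ' σ⁻¹ (t+1), Equiv.Perm.mul_apply]
    rw [h2]
    apply Equiv.swap_apply_of_ne_of_ne
    · intro hc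
      have : (σ⁻¹ ^ (t+1)) i = m :=
        σ⁻¹.injective (by rw [h2, hc] : σ⁻¹ ((σ⁻¹ ^ (t+1)) i) = σ⁻¹ m)
      exact h (t+1) (by omega) (by omega) this
    · exact h (t+2) (by omega) le_rfl

lemma no_second (σ : Equiv.Perm (Fin n)) (i : Fin n) (s u : ℕ)
    (hs : (σ⁻¹ ^ s) i = (σ⁻¹ ^ u) i) (hsu : s < u)
    (hu : u - s < Nat.find (bcode_exists σ i)) : False := by
  have hd : (σ⁻¹ ^ (u - s)) i = i := by
    have h1 : (σ⁻¹ ^ s) ((σ⁻¹ ^ (u - s)) i) = (σ⁻¹ ^ s) i := by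
      have hadd : s + (u - s) = u := by omega
      rw [← Equiv.Perm.mul_apply, ← pow_add, hadd, ← hs]
    exact (σ⁻¹ ^ s).injective h1
  exact absurd hd.le (not_le.mpr (bcode_min σ i (t := u - s) (by omega) hu))

lemma bcode_mul_swap (σ : Equiv.Perm (Fin n)) (m i : Fin n) (him : i < m) :
    Bcode (σ * Equiv.swap (σ⁻¹ m) m) i = Bcode σ i := by
  set k := Nat.find (bcode_exists σ i) with hk
  have hk1 : 1 ≤ k := bcode_find_pos σ i
  have hkle : (σ⁻¹ ^ k) i ≤ i := (Nat.find_spec (bcode_exists σ i)).2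
  have hkmin : ∀ t, 0 < t → t < k → i < (σ⁻¹ ^ t) i := fun t h1 h2 => bcode_min σ i h1 h2
  have hinm : i ≠ m := him.ne
  by_cases hA : ∀ u, 1 ≤ u → u ≤ k → (σ⁻¹ ^ u) i ≠ m
  · -- case A
    have he : Bcode (σ * Equiv.swap (σ⁻¹ m) m) i = ((σ * Equiv.swap (σ⁻¹ m) m)⁻¹ ^ k) i := by
      apply bcode_eq_of
      · omega
      · rw [orbitA σ m i hinm k hA]; exact hkle
      · intro t h1 h2
        rw [orbitA σ m i hinm t (fun u hu1 hu2 => hA u hu1 (hu2.trans h2.le))]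
        exact hkmin t h1 h2
    rw [he, orbitA σ m i hinm k hA]
    rfl
  · -- case B
    push_neg at hA
    obtain ⟨u0, hu1, hu2, hu3⟩ := hA
    have hQ : ∃ u, 1 ≤ u ∧ (σ⁻¹ ^ u) i = m := ⟨u0, hu1, hu3⟩
    have hs1 : 1 ≤ Nat.find hQ := (Nat.find_spec hQ).1
    have hs2 : (σ⁻¹ ^ Nat.find hQ) i = m := (Nat.find_spec hQ).2
    obtain ⟨s, hseq⟩ : ∃ s, Nat.find hQ = s + 1 := ⟨Nat.find hQ - 1, by omega⟩
    rw [hseq] at hs2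
    have hsmin' : ∀ u, 1 ≤ u → u ≤ s → (σ⁻¹ ^ u) i ≠ m := by
      intro u h1 h2 hc
      exact Nat.find_min hQ (by omega) ⟨h1, hc⟩
    have hs'k : s + 1 < k := by
      have hle : s + 1 ≤ k := by
        have := Nat.find_min' hQ ⟨hu1, hu3⟩; omega
      rcases lt_or_eq_of_le hle with h | h
      · exact h
      · exfalso
        rw [h] at hs2
        rw [hs2] at hkle
        exact absurd hkle (not_le.mpr him)
    have hnos : ∀ u, s + 1 < u → u ≤ k → (σ⁻¹ ^ u) i ≠ m := by
      intro u h1 h2 hc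
      exact no_second σ i (s+1) u (hs2.trans hc.symm) h1 (by omega)
    have hB := orbitB σ m i hinm s hs2 hsmin'
    have he : Bcode (σ * Equiv.swap (σ⁻¹ m) m) i = ((σ * Equiv.swap (σ⁻¹ m) m)⁻¹ ^ (k-1)) i := by
      apply bcode_eq_of
      · omega
      · rw [hB (k-1) (by omega) (fun u h1 h2 => hnos u h1 (by omega))]
        have : k - 1 + 1 = k := by omega
        rw [this]; exact hkle
      · intro t h1 h2
        rcases le_or_gt t s with ht | ht
        · rw [orbitA σ m i hinm t (fun u hu1 hu2 => hsmin' u hu1 (hu2.trans ht))]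
          exact hkmin t h1 (by omega)
        · rw [hB t (by omega) (fun u hu1 hu2 => hnos u hu1 (by omega))]
          exact hkmin (t+1) (by omega) (by omega)
    rw [he, hB (k-1) (by omega) (fun u h1 h2 => hnos u h1 (by omega))]
    have : k - 1 + 1 = k := by omega
    rw [this]
    rfl

lemma bcode_of_inv_le (σ : Equiv.Perm (Fin n)) (m : Fin n) (h : σ⁻¹ m ≤ m) :
    Bcode σ m = σ⁻¹ m := by
  have := bcode_eq_of σ m 1 one_pos (by simpa using h) (by omega)
  simpa using this

lemma sorAux_eq (fuel : ℕ) : ∀ (σ : Equiv.Perm (Fin n)),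
    (∀ j ∈ σ.support, (j : ℕ) < fuel) →
    sorAux fuel σ = ∑ i : Fin n, ((i : ℕ) - ((Bcode σ i : Fin n) : ℕ)) := by
  induction fuel with
  | zero =>
    intro σ h
    have hσ : σ = 1 := by
      rw [← Equiv.Perm.support_eq_empty_iff]
      rw [Finset.eq_empty_iff_forall_notMem]
      intro j hj
      exact absurd (h j hj) (Nat.not_lt_zero _)
    subst hσ
    rw [sorAux]
    have hb : ∀ i : Fin n, Bcode (1 : Equiv.Perm (Fin n)) i = i := fun i => bcode_fixed 1 i rfl
    simp [hb]
  | succ fuel ih =>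
    intro σ h
    rw [sorAux]
    by_cases hne : σ.support.Nonempty
    · rw [dif_pos hne]
      have hmmem := σ.support.max'_mem hne
      have hm : σ (σ.support.max' hne) ≠ σ.support.max' hne :=
        (Equiv.Perm.mem_support).mp hmmem
      have haσ : σ (σ⁻¹ (σ.support.max' hne)) = σ.support.max' hne :=
        by simp
      have ham : σ⁻¹ (σ.support.max' hne) ≠ σ.support.max' hne := by
        intro hc
        rw [hc] at haσ
        exact hm haσ
      have hasup : σ⁻¹ (σ.support.max' hne) ∈ σ.support := by
        rw [Equiv.Perm.mem_support, haσ]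
        exact fun hc => ham hc.symm
      have ham2 : σ⁻¹ (σ.support.max' hne) ≤ σ.support.max' hne :=
        σ.support.le_max' _ hasup
      have hσ'm : (σ * Equiv.swap (σ⁻¹ (σ.support.max' hne)) (σ.support.max' hne))
          (σ.support.max' hne) = σ.support.max' hne := by
        rw [Equiv.Perm.mul_apply, Equiv.swap_apply_right, haσ]
      have hsup' : ∀ j ∈ (σ * Equiv.swap (σ⁻¹ (σ.support.max' hne)) (σ.support.max' hne)).support,
          (j : ℕ) < fuel := by
        intro j hj
        rw [Equiv.Perm.mem_support] at hj
        have hjm : j ≠ σ.support.max' hne := by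
          intro hc; rw [hc] at hj; exact hj hσ'm
        have hjs : j ∈ σ.support := by
          rw [Equiv.Perm.mem_support]
          intro hfix
          have hja : j ≠ σ⁻¹ (σ.support.max' hne) := by
            intro hc; rw [hc] at hfix; rw [haσ] at hfix; exact ham hfix.symm
          apply hj
          rw [Equiv.Perm.mul_apply, Equiv.swap_apply_of_ne_of_ne hja hjm, hfix]
        have hjle : j ≤ σ.support.max' hne := σ.support.le_max' j hjs
        have hmax : ((σ.support.max' hne : Fin n) : ℕ) < fuel + 1 := h _ hmmem
        have h1 : (j : ℕ) ≤ ((σ.support.max' hne : Fin n) : ℕ) := hjle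
        have h2 : (j : ℕ) ≠ ((σ.support.max' hne : Fin n) : ℕ) := by
          intro hc; exact hjm (Fin.ext hc)
        omega
      rw [ih _ hsup']
      -- split both sums at m
      rw [← Finset.add_sum_erase Finset.univ
        (fun i : Fin n => (i : ℕ) - ((Bcode σ i : Fin n) : ℕ)) (Finset.mem_univ (σ.support.max' hne))]
      rw [← Finset.add_sum_erase Finset.univ
        (fun i : Fin n => (i : ℕ) - ((Bcode (σ * Equiv.swap (σ⁻¹ (σ.support.max' hne)) (σ.support.max' hne)) i : Fin n) : ℕ))
        (Finset.mem_univ (σ.support.max' hne))]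
      have hterm1 : ((σ.support.max' hne : Fin n) : ℕ) -
          ((Bcode σ (σ.support.max' hne) : Fin n) : ℕ) =
          ((σ.support.max' hne : Fin n) : ℕ) - ((σ⁻¹ (σ.support.max' hne) : Fin n) : ℕ) := by
        rw [bcode_of_inv_le σ _ ham2]
      have hterm2 : ((σ.support.max' hne : Fin n) : ℕ) -
          ((Bcode (σ * Equiv.swap (σ⁻¹ (σ.support.max' hne)) (σ.support.max' hne))
            (σ.support.max' hne) : Fin n) : ℕ) = 0 := by
        rw [bcode_fixed _ _ hσ'm]
        omega
      rw [hterm1, hterm2]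
      have hcongr : ∀ i ∈ Finset.univ.erase (σ.support.max' hne),
          (i : ℕ) - ((Bcode (σ * Equiv.swap (σ⁻¹ (σ.support.max' hne)) (σ.support.max' hne)) i : Fin n) : ℕ)
            = (i : ℕ) - ((Bcode σ i : Fin n) : ℕ) := by
        intro i hi
        have him : i ≠ σ.support.max' hne := Finset.ne_of_mem_erase hi
        by_cases hfix : σ i = i
        · have hia : i ≠ σ⁻¹ (σ.support.max' hne) := by
            intro hc; rw [hc] at hfix; rw [haσ] at hfix; exact ham hfix.symm
          have hfix' : (σ * Equiv.swap (σ⁻¹ (σ.support.max' hne)) (σ.support.max' hne)) i = i := by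
            rw [Equiv.Perm.mul_apply, Equiv.swap_apply_of_ne_of_ne hia him, hfix]
          rw [bcode_fixed _ _ hfix', bcode_fixed _ _ hfix]
        · have hisup : i ∈ σ.support := Equiv.Perm.mem_support.mpr hfix
          have hile : i ≤ σ.support.max' hne := σ.support.le_max' i hisup
          have hilt : i < σ.support.max' hne := lt_of_le_of_ne hile him
          rw [bcode_mul_swap σ _ i hilt]
      rw [Finset.sum_congr rfl hcongr]
      omega
    · rw [dif_neg hne]
      have hσ : σ = 1 := by
        rw [← Equiv.Perm.support_eq_empty_iff, Finset.not_nonempty_iff_eq_empty] at *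
        exact hne
      subst hσ
      have hb : ∀ i : Fin n, Bcode (1 : Equiv.Perm (Fin n)) i = i := fun i => bcode_fixed 1 i rfl
      simp [hb]

end Helpers

end SortIdx

/-- `sor σ = ∑_i (i - b_i)` where `(b_i)` is the `B`-code. -/
theorem sor_eq_sum_bcode (n : ℕ) (σ : Equiv.Perm (Fin n)) :
    SortIdx.sor σ = ∑ i : Fin n, ((i : ℕ) - ((SortIdx.Bcode σ i : Fin n) : ℕ)) := by
  exact SortIdx.sorAux_eq n σ (fun j _ => j.isLt)
end

section
/- For all subsets S_1, S_2, S_3 ⊆ [n], the three counts #{σ ∈ S_n : Rmil(σ)=S_1, Lmil(σ)=S_2, Lmap(σ)=S_3}, #{σ ∈ S_n : Cyc(σ)=S_1, Lmic1(σ)=S_2, Lmap(σ)=S_3}, and #{σ ∈ S_n : Lmap(σ)=S_1, Lmip(σ)=S_2, Rmil(σ)=S_3} are all equal; that is, the triples of set-valued statistics (Rmil, Lmil, Lmap), (Cyc, Lmic1, Lmap), (Lmap, Lmip, Rmil) have the same joint distribution over S_n. -/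
open scoped Classical

theorem Equiv.Perm.apply_inv_self {α : Type*} (σ : Equiv.Perm α) (x : α) : σ (σ⁻¹ x) = x :=
  Equiv.apply_symm_apply σ x

theorem Equiv.Perm.inv_apply_self {α : Type*} (σ : Equiv.Perm α) (x : α) : σ⁻¹ (σ x) = x :=
  Equiv.symm_apply_apply σ x

theorem Equiv.apply_inv_self {α : Type*} (σ : Equiv.Perm α) (x : α) : σ (σ⁻¹ x) = x :=
  Equiv.apply_symm_apply σ x

namespace SortIdx

variable {n : ℕ}

/-! ### Basic membership lemmas -/

lemma mem_LmapSet {σ : Equiv.Perm (Fin n)} {i : Fin n} :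
    i ∈ LmapSet σ ↔ ∀ j, j < i → σ j < σ i := by
  simp [LmapSet]

lemma mem_LmipSet {σ : Equiv.Perm (Fin n)} {i : Fin n} :
    i ∈ LmipSet σ ↔ ∀ j, j < i → σ i < σ j := by
  simp [LmipSet]

lemma mem_RmilSet {σ : Equiv.Perm (Fin n)} {x : Fin n} :
    x ∈ RmilSet σ ↔ ∀ y, y ≤ x → σ⁻¹ y ≤ σ⁻¹ x := by
  simp only [RmilSet, Finset.mem_image, Finset.mem_filter, Finset.mem_univ, true_and]
  constructor
  · rintro ⟨p, hp, rfl⟩ y hy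
    rw [Equiv.Perm.inv_apply_self]
    by_contra hlt
    push_neg at hlt
    have := hp _ hlt
    rw [Equiv.Perm.apply_inv_self] at this
    exact absurd hy (not_le.mpr this)
  · intro h
    refine ⟨σ⁻¹ x, fun j hj => ?_, by simp⟩
    rw [Equiv.Perm.apply_inv_self]
    by_contra hle
    push_neg at hle
    have := h (σ j) hle
    rw [Equiv.Perm.inv_apply_self] at this
    exact absurd hj (not_lt.mpr this)

lemma mem_LmilSet {σ : Equiv.Perm (Fin n)} {x : Fin n} :
    x ∈ LmilSet σ ↔ ∀ y, y ≤ x → σ⁻¹ x ≤ σ⁻¹ y := by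
  simp only [LmilSet, Finset.mem_image, Finset.mem_filter, Finset.mem_univ, true_and]
  constructor
  · rintro ⟨p, hp, rfl⟩ y hy
    rw [Equiv.Perm.inv_apply_self]
    by_contra hlt
    push_neg at hlt
    have := hp _ hlt
    rw [Equiv.Perm.apply_inv_self] at this
    exact absurd hy (not_le.mpr this)
  · intro h
    refine ⟨σ⁻¹ x, fun j hj => ?_, by simp⟩
    rw [Equiv.Perm.apply_inv_self]
    by_contra hle
    push_neg at hle
    have := h (σ j) hle
    rw [Equiv.Perm.inv_apply_self] at this
    exact absurd hj (not_lt.mpr this)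

/-- helper: `∀ y ≤ x, σ y ≤ σ x` iff `∀ j < x, σ j < σ x`. -/
lemma le_iff_lt_aux {σ : Equiv.Perm (Fin n)} {x : Fin n} :
    (∀ y, y ≤ x → σ y ≤ σ x) ↔ (∀ j, j < x → σ j < σ x) := by
  constructor
  · intro h j hj
    exact lt_of_le_of_ne (h j hj.le) (fun he => hj.ne (σ.injective he))
  · intro h y hy
    rcases eq_or_lt_of_le hy with rfl | hy
    · exact le_rfl
    · exact (h y hy).le

lemma ge_iff_gt_aux {σ : Equiv.Perm (Fin n)} {x : Fin n} :
    (∀ y, y ≤ x → σ x ≤ σ y) ↔ (∀ j, j < x → σ x < σ j) := by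
  constructor
  · intro h j hj
    exact lt_of_le_of_ne (h j hj.le) (fun he => hj.ne (σ.injective he.symm))
  · intro h y hy
    rcases eq_or_lt_of_le hy with rfl | hy
    · exact le_rfl
    · exact (h y hy).le

/-! ### The inverse map identities -/

lemma RmilSet_inv (σ : Equiv.Perm (Fin n)) : RmilSet σ⁻¹ = LmapSet σ := by
  ext x
  rw [mem_RmilSet, mem_LmapSet, ← le_iff_lt_aux]
  simp [inv_inv]

lemma LmilSet_inv (σ : Equiv.Perm (Fin n)) : LmilSet σ⁻¹ = LmipSet σ := by
  ext x
  rw [mem_LmilSet, mem_LmipSet, ← ge_iff_gt_aux]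
  simp [inv_inv]

lemma LmapSet_inv (σ : Equiv.Perm (Fin n)) : LmapSet σ⁻¹ = RmilSet σ := by
  rw [← RmilSet_inv σ⁻¹, inv_inv]

lemma LmipSet_inv (σ : Equiv.Perm (Fin n)) : LmipSet σ⁻¹ = LmilSet σ := by
  rw [← LmilSet_inv σ⁻¹, inv_inv]

end SortIdx
namespace SortIdx

variable {n : ℕ}

lemma lt_orbit_of_lt_find (σ : Equiv.Perm (Fin n)) (i : Fin n) {k : ℕ}
    (h0 : 0 < k) (hk : k < Nat.find (bcode_exists σ i)) : i < (σ⁻¹ ^ k) i := by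
  have := Nat.find_min (bcode_exists σ i) hk
  push_neg at this
  exact this h0

lemma bcode_eq_of_inv_le (σ : Equiv.Perm (Fin n)) (i : Fin n) (h : σ⁻¹ i ≤ i) :
    Bcode σ i = σ⁻¹ i := by
  have hfind : Nat.find (bcode_exists σ i) = 1 := by
    rw [Nat.find_eq_iff]
    refine ⟨⟨one_pos, by simpa using h⟩, ?_⟩
    intro k hk
    interval_cases k
    simp
  rw [Bcode, hfind, pow_one]

lemma bcodeNat_le (σ : Equiv.Perm (Fin n)) (i : Fin n) :
    BcodeNat σ i ≤ (i : ℕ) + 1 := by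
  have := bcode_le σ i
  rw [BcodeNat]
  exact Nat.succ_le_succ (Fin.le_iff_val_le_val.mp this)

end SortIdx
namespace SortIdx

variable {n : ℕ}

/-! ### Cyc = M(Bcode) -/

lemma mem_CycSet {σ : Equiv.Perm (Fin n)} {i : Fin n} :
    i ∈ CycSet σ ↔ ∀ k : ℕ, i ≤ (σ ^ k) i := by
  simp [CycSet]

lemma mem_CycSet_iff_bcode {σ : Equiv.Perm (Fin n)} {i : Fin n} :
    i ∈ CycSet σ ↔ Bcode σ i = i := by
  rw [mem_CycSet]
  set K := Nat.find (bcode_exists σ i) with hK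
  constructor
  · intro h
    have hle : (σ⁻¹ ^ K) i ≤ i := (Nat.find_spec (bcode_exists σ i)).2
    have hge : i ≤ (σ⁻¹ ^ K) i := by
      have ho : 1 ≤ orderOf σ := orderOf_pos σ
      have hpow : (σ⁻¹ : Equiv.Perm (Fin n)) ^ K = σ ^ (orderOf σ * K - K) := by
        have h1 : σ ^ (orderOf σ * K - K) * σ ^ K = 1 := by
          rw [← pow_add]
          have : orderOf σ * K - K + K = orderOf σ * K := by
            have : K ≤ orderOf σ * K := Nat.le_mul_of_pos_left K (orderOf_pos σ)
            omega
          rw [this, pow_mul, pow_orderOf_eq_one, one_pow]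
        calc (σ⁻¹ : Equiv.Perm (Fin n)) ^ K = (σ ^ K)⁻¹ := (inv_pow σ K).symm
        _ = σ ^ (orderOf σ * K - K) := by
            rw [eq_comm, eq_inv_iff_mul_eq_one]; exact h1
      rw [hpow]
      exact h _
    exact le_antisymm hle hge
  · intro hB m
    have hKi : (σ⁻¹ ^ K) i = i := by
      have hle : (σ⁻¹ ^ K) i ≤ i := (Nat.find_spec (bcode_exists σ i)).2
      have : Bcode σ i = (σ⁻¹ ^ K) i := rfl
      rw [← this, hB]
    have hKpos : 0 < K := (Nat.find_spec (bcode_exists σ i)).1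
    have fixK : ∀ j : ℕ, (σ⁻¹ ^ (K * j)) i = i := by
      intro j
      induction j with
      | zero => simp
      | succ j ih =>
        have : K * (j + 1) = K + K * j := by ring
        rw [this, pow_add, Equiv.Perm.mul_apply, ih, hKi]
    -- σ^m i = (σ⁻¹)^(K*m - m) i
    have key : (σ ^ m) i = (σ⁻¹ ^ (K * m - m)) i := by
      have hmm : m ≤ K * m := Nat.le_mul_of_pos_left m hKpos
      have h1 : (σ ^ m) * (σ⁻¹ ^ (K * m)) = σ⁻¹ ^ (K * m - m) := by
        have : (σ⁻¹ : Equiv.Perm (Fin n)) ^ (K * m) = σ⁻¹ ^ m * σ⁻¹ ^ (K * m - m) := by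
          rw [← pow_add]
          congr 1
          omega
        rw [this, ← mul_assoc]
        have : (σ ^ m) * (σ⁻¹ ^ m) = 1 := by
          rw [inv_pow, mul_inv_cancel]
        rw [this, one_mul]
      calc (σ ^ m) i = (σ ^ m) ((σ⁻¹ ^ (K * m)) i) := by rw [fixK m]
      _ = ((σ ^ m) * (σ⁻¹ ^ (K * m))) i := rfl
      _ = (σ⁻¹ ^ (K * m - m)) i := by rw [h1]
    rw [key]
    set r := K * m - m with hr
    have h2 : r = r % K + K * (r / K) := by
      have := Nat.div_add_mod r K; omega
    have : (σ⁻¹ ^ r) i = (σ⁻¹ ^ (r % K)) i := by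
      conv_lhs => rw [h2]
      rw [pow_add, Equiv.Perm.mul_apply, fixK (r / K)]
    rw [this]
    rcases Nat.eq_zero_or_pos (r % K) with h0 | h0
    · rw [h0]; simp
    · exact (lt_orbit_of_lt_find σ i h0 (Nat.mod_lt r hKpos)).le

end SortIdx
namespace SortIdx

variable {n : ℕ}

/-! ### A-code basics and statistics -/

lemma acode_def (σ : Equiv.Perm (Fin n)) (i : Fin n) :
    Acode σ i = (Finset.univ.filter (fun j => j ≤ i ∧ σ⁻¹ j ≤ σ⁻¹ i)).card := rfl

lemma acode_pos (σ : Equiv.Perm (Fin n)) (i : Fin n) : 1 ≤ Acode σ i := by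
  rw [acode_def]
  refine Finset.card_pos.mpr ⟨i, ?_⟩
  simp

lemma acode_le (σ : Equiv.Perm (Fin n)) (i : Fin n) : Acode σ i ≤ (i : ℕ) + 1 := by
  rw [acode_def]
  calc (Finset.univ.filter (fun j => j ≤ i ∧ σ⁻¹ j ≤ σ⁻¹ i)).card
      ≤ (Finset.Iic i).card := by
        apply Finset.card_le_card
        intro j hj
        simp only [Finset.mem_filter] at hj
        simp [hj.2.1]
  _ = (i : ℕ) + 1 := by rw [Fin.card_Iic]

lemma acode_eq_top_iff {σ : Equiv.Perm (Fin n)} {i : Fin n} :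
    Acode σ i = (i : ℕ) + 1 ↔ i ∈ RmilSet σ := by
  rw [acode_def, mem_RmilSet]
  constructor
  · intro h y hy
    have hsub : Finset.univ.filter (fun j => j ≤ i ∧ σ⁻¹ j ≤ σ⁻¹ i) ⊆ Finset.Iic i := by
      intro j hj
      simp only [Finset.mem_filter] at hj
      simp [hj.2.1]
    have heq : Finset.univ.filter (fun j => j ≤ i ∧ σ⁻¹ j ≤ σ⁻¹ i) = Finset.Iic i := by
      apply Finset.eq_of_subset_of_card_le hsub
      rw [Fin.card_Iic, h]
    have : y ∈ Finset.univ.filter (fun j => j ≤ i ∧ σ⁻¹ j ≤ σ⁻¹ i) := by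
      rw [heq]; simp [hy]
    simp only [Finset.mem_filter] at this
    exact this.2.2
  · intro h
    have heq : Finset.univ.filter (fun j => j ≤ i ∧ σ⁻¹ j ≤ σ⁻¹ i) = Finset.Iic i := by
      ext j
      simp only [Finset.mem_filter, Finset.mem_univ, true_and, Finset.mem_Iic]
      exact ⟨fun hj => hj.1, fun hj => ⟨hj, h j hj⟩⟩
    rw [heq, Fin.card_Iic]

lemma acode_eq_one_iff {σ : Equiv.Perm (Fin n)} {i : Fin n} :
    Acode σ i = 1 ↔ i ∈ LmilSet σ := by
  rw [acode_def, mem_LmilSet]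
  have hi : i ∈ Finset.univ.filter (fun j => j ≤ i ∧ σ⁻¹ j ≤ σ⁻¹ i) := by simp
  constructor
  · intro h y hy
    by_contra hlt
    push_neg at hlt
    have hy' : y ∈ Finset.univ.filter (fun j => j ≤ i ∧ σ⁻¹ j ≤ σ⁻¹ i) := by
      simp only [Finset.mem_filter, Finset.mem_univ, true_and]
      exact ⟨hy, hlt.le⟩
    obtain ⟨a, ha⟩ := Finset.card_eq_one.mp h
    rw [ha, Finset.mem_singleton] at hi hy'
    rw [hy', ← hi] at hlt
    exact lt_irrefl _ hlt
  · intro h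
    rw [Finset.card_eq_one]
    refine ⟨i, ?_⟩
    ext j
    simp only [Finset.mem_filter, Finset.mem_univ, true_and, Finset.mem_singleton]
    constructor
    · rintro ⟨hj1, hj2⟩
      exact σ⁻¹.injective (le_antisymm hj2 (h j hj1))
    · rintro rfl; simp
end SortIdx
namespace SortIdx

variable {n : ℕ}

/-- The code-statistic capturing `Lmap` for both the A- and B-codes. -/
def Gcond (c : Fin n → ℕ) (x : Fin n) : Prop :=
  ∃ p : Fin n, c p = (x : ℕ) + 1 ∧ ∀ q, p < q → (x : ℕ) + 1 < c q

lemma image_le_of_lmap {σ : Equiv.Perm (Fin n)} {x : Fin n}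
    (hx : x ∈ LmapSet σ) {w : Fin n} (hw : w ≤ x) : σ w ≤ σ x := by
  rcases eq_or_lt_of_le hw with rfl | hw
  · exact le_rfl
  · exact (mem_LmapSet.mp hx w hw).le

lemma acode_lmap_fwd_eq {σ : Equiv.Perm (Fin n)} {x : Fin n}
    (hx : x ∈ LmapSet σ) : Acode σ (σ x) = (x : ℕ) + 1 := by
  rw [acode_def]
  have heq : Finset.univ.filter (fun j => j ≤ σ x ∧ σ⁻¹ j ≤ σ⁻¹ (σ x))
      = (Finset.Iic x).image σ := by
    ext j
    simp only [Finset.mem_filter, Finset.mem_univ, true_and, Finset.mem_image,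
      Finset.mem_Iic, Equiv.Perm.inv_apply_self]
    constructor
    · rintro ⟨hj1, hj2⟩
      exact ⟨σ⁻¹ j, hj2, σ.apply_inv_self j⟩
    · rintro ⟨w, hw, rfl⟩
      exact ⟨image_le_of_lmap hx hw, by simpa using hw⟩
  rw [heq, Finset.card_image_of_injective _ σ.injective, Fin.card_Iic]

lemma acode_lmap_fwd_lt {σ : Equiv.Perm (Fin n)} {x : Fin n}
    (hx : x ∈ LmapSet σ) {q : Fin n} (hq : σ x < q) : (x : ℕ) + 1 < Acode σ q := by
  have hxq : x < σ⁻¹ q := by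
    by_contra hle
    push_neg at hle
    have : σ (σ⁻¹ q) ≤ σ x := image_le_of_lmap hx hle
    rw [σ.apply_inv_self] at this
    exact absurd hq (not_lt.mpr this)
  have hsub : insert q ((Finset.Iic x).image σ)
      ⊆ Finset.univ.filter (fun j => j ≤ q ∧ σ⁻¹ j ≤ σ⁻¹ q) := by
    intro j hj
    rcases Finset.mem_insert.mp hj with rfl | hj
    · simp
    · obtain ⟨w, hw, rfl⟩ := Finset.mem_image.mp hj
      rw [Finset.mem_Iic] at hw
      refine Finset.mem_filter.mpr ⟨Finset.mem_univ _, ?_, ?_⟩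
      · exact le_of_lt (lt_of_le_of_lt (image_le_of_lmap hx hw) hq)
      · rw [Equiv.Perm.inv_apply_self]
        exact le_of_lt (lt_of_le_of_lt hw hxq)
  have hnotmem : q ∉ (Finset.Iic x).image σ := by
    intro hmem
    obtain ⟨w, hw, hwq⟩ := Finset.mem_image.mp hmem
    rw [Finset.mem_Iic] at hw
    have : σ⁻¹ q = w := by rw [← hwq, Equiv.Perm.inv_apply_self]
    rw [this] at hxq
    exact absurd hw (not_le.mpr hxq)
  calc (x : ℕ) + 1 < (x : ℕ) + 1 + 1 := lt_add_one _
  _ = (insert q ((Finset.Iic x).image σ)).card := by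
      rw [Finset.card_insert_of_notMem hnotmem,
        Finset.card_image_of_injective _ σ.injective, Fin.card_Iic]
  _ ≤ _ := Finset.card_le_card hsub
  
lemma lmap_iff_gcond_acode {σ : Equiv.Perm (Fin n)} {x : Fin n} :
    x ∈ LmapSet σ ↔ Gcond (Acode σ) x := by
  constructor
  · intro hx
    exact ⟨σ x, acode_lmap_fwd_eq hx, fun q hq => acode_lmap_fwd_lt hx hq⟩
  · rintro ⟨p, hp, hrest⟩
    set y := σ⁻¹ p with hy
    -- the prefix maximum place over Iic y
    obtain ⟨istar, histar, hmax⟩ :=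
      Finset.exists_max_image (Finset.Iic y) σ ⟨y, Finset.mem_Iic.mpr le_rfl⟩
    rw [Finset.mem_Iic] at histar
    have histarLmap : istar ∈ LmapSet σ := by
      rw [mem_LmapSet]
      intro j hj
      have hjy : j ∈ Finset.Iic y := Finset.mem_Iic.mpr (le_of_lt (lt_of_lt_of_le hj histar))
      exact lt_of_le_of_ne (hmax j hjy) (fun he => hj.ne (σ.injective he))
    have hpm : p ≤ σ istar := by
      have : σ y ≤ σ istar := hmax y (Finset.mem_Iic.mpr le_rfl)
      rwa [hy, σ.apply_inv_self] at this
    have hAm : Acode σ (σ istar) = (istar : ℕ) + 1 := acode_lmap_fwd_eq histarLmap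
    rcases eq_or_lt_of_le hpm with hpeq | hplt
    · -- p = σ istar : then x = istar
      have : (x : ℕ) + 1 = (istar : ℕ) + 1 := by rw [← hp, hpeq, hAm]
      have : x = istar := Fin.ext (by omega)
      rw [this]; exact histarLmap
    · -- p < σ istar : contradiction
      exfalso
      have hxi : (x : ℕ) + 1 ≤ (istar : ℕ) := by
        have := hrest _ hplt
        rw [hAm] at this
        omega
      -- K : places ≤ y with value ≤ p
      set K := Finset.univ.filter (fun w : Fin n => w ≤ y ∧ σ w ≤ p) with hKdef
      have hKcard : K.card = (x : ℕ) + 1 := by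
        have himg : K = (Finset.univ.filter (fun j => j ≤ p ∧ σ⁻¹ j ≤ σ⁻¹ p)).image ⇑σ⁻¹ := by
          ext w
          simp only [hKdef, Finset.mem_filter, Finset.mem_univ, true_and, Finset.mem_image]
          constructor
          · rintro ⟨hw1, hw2⟩
            exact ⟨σ w, ⟨hw2, by simpa [hy] using hw1⟩, by simp⟩
          · rintro ⟨j, ⟨hj1, hj2⟩, rfl⟩
            exact ⟨by simpa [hy] using hj2, by simpa using hj1⟩
        rw [himg, Finset.card_image_of_injective _ σ⁻¹.injective, ← acode_def, hp]
      -- W : places ≤ istar with value > p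
      set W := Finset.univ.filter (fun w : Fin n => w ≤ istar ∧ p < σ w) with hWdef
      have hWne : W.Nonempty := by
        by_contra hW
        rw [Finset.not_nonempty_iff_eq_empty] at hW
        have hsub : Finset.Iic istar ⊆ K := by
          intro w hw
          rw [Finset.mem_Iic] at hw
          have hwp : σ w ≤ p := by
            by_contra hc
            push_neg at hc
            have : w ∈ W := by
              rw [hWdef]; simp [hw, hc]
            rw [hW] at this
            exact absurd this (Finset.notMem_empty w)
          rw [hKdef, Finset.mem_filter]
          exact ⟨Finset.mem_univ _, le_trans hw histar, hwp⟩
        have := Finset.card_le_card hsub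
        rw [Fin.card_Iic, hKcard] at this
        omega
      set w0 := W.min' hWne with hw0
      have hw0mem := Finset.mem_filter.mp
        (show w0 ∈ Finset.univ.filter (fun w : Fin n => w ≤ istar ∧ p < σ w) from
          W.min'_mem hWne)
      obtain ⟨-, hw0i, hw0p⟩ := hw0mem
      have hIio : ∀ w', w' < w0 → σ w' ≤ p := by
        intro w' hw'
        by_contra hc
        push_neg at hc
        have hw'W : w' ∈ W := by
          rw [hWdef, Finset.mem_filter]
          exact ⟨Finset.mem_univ _, le_of_lt (lt_of_lt_of_le hw' hw0i), hc⟩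
        exact absurd hw' (not_lt.mpr (W.min'_le w' hw'W))
      have hAq : Acode σ (σ w0) = (w0 : ℕ) + 1 := by
        rw [acode_def]
        have heq : Finset.univ.filter (fun j => j ≤ σ w0 ∧ σ⁻¹ j ≤ σ⁻¹ (σ w0))
            = (Finset.Iic w0).image σ := by
          ext j
          simp only [Finset.mem_filter, Finset.mem_univ, true_and, Finset.mem_image,
            Finset.mem_Iic, Equiv.Perm.inv_apply_self]
          constructor
          · rintro ⟨hj1, hj2⟩
            exact ⟨σ⁻¹ j, hj2, σ.apply_inv_self j⟩
          · rintro ⟨w, hw, rfl⟩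
            refine ⟨?_, by simpa using hw⟩
            rcases eq_or_lt_of_le hw with rfl | hw
            · exact le_rfl
            · exact le_of_lt (lt_of_le_of_lt (hIio w hw) hw0p)
        rw [heq, Finset.card_image_of_injective _ σ.injective, Fin.card_Iic]
      have hxw0 : (x : ℕ) + 1 ≤ (w0 : ℕ) := by
        have := hrest _ hw0p
        rw [hAq] at this
        omega
      have hIiosub : Finset.Iio w0 ⊆ K := by
        intro w' hw'
        rw [Finset.mem_Iio] at hw'
        rw [hKdef, Finset.mem_filter]
        exact ⟨Finset.mem_univ _,
          le_trans (le_of_lt (lt_of_lt_of_le hw' hw0i)) (le_trans histar le_rfl),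
          hIio w' hw'⟩
      have hw0x : (w0 : ℕ) ≤ (x : ℕ) + 1 := by
        have := Finset.card_le_card hIiosub
        rw [Fin.card_Iio, hKcard] at this
        exact this
      have hKeq : K = Finset.Iio w0 := by
        apply (Finset.eq_of_subset_of_card_le hIiosub ?_).symm
        rw [Fin.card_Iio, hKcard]
        omega
      have hyK : y ∈ K := by
        rw [hKdef, Finset.mem_filter]
        refine ⟨Finset.mem_univ _, le_rfl, ?_⟩
        rw [hy, σ.apply_inv_self]
      rw [hKeq, Finset.mem_Iio] at hyK
      have : (istar : ℕ) < (w0 : ℕ) := lt_of_le_of_lt histar hyK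
      omega

end SortIdx
namespace SortIdx

variable {n : ℕ}

/-! ### The splice lemma for the B-code -/

lemma fix_above_maps_le {σ : Equiv.Perm (Fin n)} {t : Fin n}
    (hfix : ∀ j, t < j → σ j = j) {j : Fin n} (hj : j ≤ t) : σ j ≤ t := by
  by_contra hc
  push_neg at hc
  have h2 : σ j = j := σ.injective (hfix (σ j) hc)
  rw [h2] at hc
  exact absurd hj (not_le.mpr hc)

lemma inv_fix_above_maps_le {σ : Equiv.Perm (Fin n)} {t : Fin n}
    (hfix : ∀ j, t < j → σ j = j) {j : Fin n} (hj : j ≤ t) : σ⁻¹ j ≤ t := by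
  by_contra hc
  push_neg at hc
  have h2 : σ (σ⁻¹ j) = σ⁻¹ j := hfix _ hc
  rw [σ.apply_inv_self] at h2
  rw [← h2] at hc
  exact absurd hj (not_le.mpr hc)

lemma bcode_splice (σ : Equiv.Perm (Fin n)) (t : Fin n) (hfix : ∀ j, t < j → σ j = j)
    (hbt : σ⁻¹ t ≠ t) {i : Fin n} (hit : i < t) :
    Bcode (σ * Equiv.swap (σ⁻¹ t) t) i = Bcode σ i := by
  set b := σ⁻¹ t with hb
  set σ' := σ * Equiv.swap b t with hσ'
  have hσb : σ b = t := σ.apply_inv_self t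
  have hinv' : σ'⁻¹ = Equiv.swap b t * σ⁻¹ := by
    rw [hσ', mul_inv_rev, Equiv.swap_inv]
  -- one-step facts
  have hstep : ∀ x : Fin n, x ≠ t → σ⁻¹ x ≠ t → σ'⁻¹ x = σ⁻¹ x := by
    intro x hx hix
    rw [hinv', Equiv.Perm.mul_apply]
    apply Equiv.swap_apply_of_ne_of_ne
    · intro he
      apply hx
      rw [← σ.apply_inv_self x, he, hσb]
    · exact hix
  have hstep2 : ∀ x : Fin n, σ⁻¹ x = t → σ'⁻¹ x = σ⁻¹ (σ⁻¹ x) := by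
    intro x hix
    rw [hinv', Equiv.Perm.mul_apply, hix, Equiv.swap_apply_right, hb]
  have hpw : ∀ (g : Equiv.Perm (Fin n)) (k : ℕ) (x : Fin n), g ((g ^ k) x) = (g ^ (k + 1)) x := by
    intro g k x
    rw [pow_succ', Equiv.Perm.mul_apply]
  set K := Nat.find (bcode_exists σ i) with hK
  have hK1 : 0 < K := (Nat.find_spec (bcode_exists σ i)).1
  have hK2 : (σ⁻¹ ^ K) i ≤ i := (Nat.find_spec (bcode_exists σ i)).2
  have hKmin : ∀ k, 0 < k → k < K → i < (σ⁻¹ ^ k) i := fun k h0 hk =>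
    lt_orbit_of_lt_find σ i h0 hk
  have hdist : ∀ a c : ℕ, a < c → c ≤ K → (0 < a ∨ c < K) →
      (σ⁻¹ ^ a) i ≠ (σ⁻¹ ^ c) i := by
    intro a c hac hcK hor he
    have h1 : (σ⁻¹ ^ c) i = (σ⁻¹ ^ a) ((σ⁻¹ ^ (c - a)) i) := by
      rw [← Equiv.Perm.mul_apply, ← pow_add]
      congr 2
      omega
    rw [h1] at he
    have h2 : (σ⁻¹ ^ (c - a)) i = i := ((σ⁻¹ ^ a).injective he).symm
    have h3 : i < (σ⁻¹ ^ (c - a)) i := hKmin _ (by omega) (by omega)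
    rw [h2] at h3
    exact lt_irrefl _ h3
  -- whether t occurs in the orbit before K
  by_cases hc : ∃ s, 0 < s ∧ s < K ∧ (σ⁻¹ ^ s) i = t
  · obtain ⟨s, hs0, hsK, hst⟩ := hc
    have htonly : ∀ k, k ≤ K → k ≠ s → (σ⁻¹ ^ k) i ≠ t := by
      intro k hkK hks he
      rcases lt_trichotomy k s with h | h | h
      · exact hdist k s h hsK.le (Or.inr hsK) (he.trans hst.symm)
      · exact hks h
      · exact hdist s k h hkK (Or.inl hs0) (hst.trans he.symm)
    have horb1 : ∀ k, k < s → (σ'⁻¹ ^ k) i = (σ⁻¹ ^ k) i := by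
      intro k hk
      induction k with
      | zero => simp
      | succ k ih =>
        rw [pow_succ', Equiv.Perm.mul_apply, ih (by omega)]
        rw [hstep _ (htonly k (by omega) (by omega)) (by
          rw [hpw]
          exact htonly (k + 1) (by omega) (by omega)), hpw]
    have horb2 : ∀ d, s + d ≤ K - 1 → (σ'⁻¹ ^ (s + d)) i = (σ⁻¹ ^ (s + d + 1)) i := by
      intro d hd
      induction d with
      | zero =>
        have hs1 : s = (s - 1) + 1 := by omega
        have hx : σ⁻¹ ((σ⁻¹ ^ (s - 1)) i) = t := by
          rw [hpw, ← hs1]; exact hst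
        have e1 : (σ'⁻¹ ^ (s + 0)) i = σ'⁻¹ ((σ⁻¹ ^ (s - 1)) i) := by
          rw [Nat.add_zero]
          conv_lhs => rw [hs1, pow_succ', Equiv.Perm.mul_apply]
          rw [horb1 (s - 1) (by omega)]
        rw [e1, hstep2 _ hx, hx]
        have h5 : σ⁻¹ t = σ⁻¹ ((σ⁻¹ ^ s) i) := by rw [hst]
        rw [h5, hpw]
      | succ d ih =>
        have e1 : (σ'⁻¹ ^ (s + (d + 1))) i = σ'⁻¹ ((σ⁻¹ ^ (s + d + 1)) i) := by
          rw [show s + (d + 1) = (s + d) + 1 from by omega, pow_succ',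
            Equiv.Perm.mul_apply, ih (by omega)]
        rw [e1, hstep _ (htonly (s + d + 1) (by omega) (by omega)) (by
          rw [hpw]
          exact htonly (s + d + 2) (by omega) (by omega)), hpw]
        congr 1
    have hKge2 : 2 ≤ K := by omega
    have hfind' : Nat.find (bcode_exists σ' i) = K - 1 := by
      rw [Nat.find_eq_iff]
      constructor
      · refine ⟨by omega, ?_⟩
        have := horb2 (K - 1 - s) (by omega)
        have he : s + (K - 1 - s) = K - 1 := by omega
        rw [he] at this
        rw [this]
        have : K - 1 + 1 = K := by omega
        rw [this]
        exact hK2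
      · intro k hk
        rintro ⟨hk0, hkle⟩
        rcases lt_or_ge k s with h | h
        · rw [horb1 k h] at hkle
          exact absurd hkle (not_le.mpr (hKmin k hk0 (by omega)))
        · have : k = s + (k - s) := by omega
          rw [this, horb2 (k - s) (by omega)] at hkle
          have : s + (k - s) + 1 = k + 1 := by omega
          rw [this] at hkle
          exact absurd hkle (not_le.mpr (hKmin (k+1) (by omega) (by omega)))
    show (σ'⁻¹ ^ Nat.find (bcode_exists σ' i)) i = (σ⁻¹ ^ K) i
    rw [hfind']
    have h6 := horb2 (K - 1 - s) (by omega)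
    rw [show s + (K - 1 - s) = K - 1 from by omega] at h6
    rw [show K - 1 + 1 = K from by omega] at h6
    exact h6
  · push_neg at hc
    have hnot : ∀ k, k ≤ K → (σ⁻¹ ^ k) i ≠ t := by
      intro k hkK
      rcases Nat.eq_zero_or_pos k with rfl | hk0
      · simpa using hit.ne
      · rcases eq_or_lt_of_le hkK with rfl | hkK'
        · intro he
          rw [he] at hK2
          exact absurd hit (not_lt.mpr hK2)
        · exact hc k hk0 hkK'
    have horb : ∀ k, k ≤ K → (σ'⁻¹ ^ k) i = (σ⁻¹ ^ k) i := by
      intro k hkK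
      induction k with
      | zero => simp
      | succ k ih =>
        rw [pow_succ', pow_succ', Equiv.Perm.mul_apply, Equiv.Perm.mul_apply,
          ih (by omega)]
        rw [hstep _ (hnot k (by omega)) (by
          rw [hpw]
          exact hnot (k+1) hkK), hpw]
    have hfind' : Nat.find (bcode_exists σ' i) = K := by
      rw [Nat.find_eq_iff]
      refine ⟨⟨hK1, by rw [horb K le_rfl]; exact hK2⟩, ?_⟩
      intro k hk
      rintro ⟨hk0, hkle⟩
      rw [horb k hk.le] at hkle
      exact absurd hkle (not_le.mpr (hKmin k hk0 hk))
    show (σ'⁻¹ ^ Nat.find (bcode_exists σ' i)) i = (σ⁻¹ ^ K) i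
    rw [hfind', horb K le_rfl]

end SortIdx
namespace SortIdx

variable {n : ℕ}

lemma bcode_fix (σ : Equiv.Perm (Fin n)) {q : Fin n} (hq : σ q = q) : Bcode σ q = q := by
  have h1 : σ⁻¹ q = q := by
    rw [← hq, Equiv.Perm.inv_apply_self, hq]
  rw [bcode_eq_of_inv_le σ q (le_of_eq h1), h1]

lemma bcodeNat_eq_iff {σ τ : Equiv.Perm (Fin n)} :
    BcodeNat σ = BcodeNat τ ↔ ∀ i, Bcode σ i = Bcode τ i := by
  constructor
  · intro h i
    have := congrFun h i
    rw [BcodeNat, BcodeNat] at this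
    exact Fin.ext (by omega)
  · intro h
    funext i
    rw [BcodeNat, BcodeNat, h i]

lemma bcodeNat_inj_aux : ∀ m : ℕ, ∀ σ τ : Equiv.Perm (Fin n),
    (∀ j : Fin n, m ≤ (j : ℕ) → σ j = j) → (∀ j : Fin n, m ≤ (j : ℕ) → τ j = j) →
    BcodeNat σ = BcodeNat τ → σ = τ := by
  intro m
  induction m with
  | zero =>
    intro σ τ hσ hτ _
    ext j
    rw [hσ j (Nat.zero_le _), hτ j (Nat.zero_le _)]
  | succ m ih =>
    intro σ τ hσ hτ hcode
    by_cases hmn : m < n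
    · set t : Fin n := ⟨m, hmn⟩ with ht
      have htv : (t : ℕ) = m := rfl
      have hfixσ : ∀ j, t < j → σ j = j := fun j hj => hσ j (by
        have h1 : (t : ℕ) < (j : ℕ) := hj
        omega)
      have hfixτ : ∀ j, t < j → τ j = j := fun j hj => hτ j (by
        have h1 : (t : ℕ) < (j : ℕ) := hj
        omega)
      have hbσ : σ⁻¹ t ≤ t := inv_fix_above_maps_le hfixσ le_rfl
      have hbτ : τ⁻¹ t ≤ t := inv_fix_above_maps_le hfixτ le_rfl
      have hbb : σ⁻¹ t = τ⁻¹ t := by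
        have h1 := (bcodeNat_eq_iff.mp hcode) t
        rwa [bcode_eq_of_inv_le σ t hbσ, bcode_eq_of_inv_le τ t hbτ] at h1
      set b := σ⁻¹ t with hb
      rcases eq_or_ne b t with hbt | hbt
      · -- σ and τ fix t as well
        have h1 : σ⁻¹ t = t := by rw [← hb, hbt]
        have h2 : τ⁻¹ t = t := by rw [← hbb, hbt]
        have hσt : σ t = t := by
          have h3 := σ.apply_inv_self t
          rwa [h1] at h3
        have hτt : τ t = t := by
          have h3 := τ.apply_inv_self t
          rwa [h2] at h3
        apply ih σ τ ?_ ?_ hcode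
        · intro j hj
          rcases eq_or_lt_of_le hj with he | hlt
          · have h4 : j = t := Fin.ext (by omega)
            rw [h4, hσt]
          · exact hσ j (by omega)
        · intro j hj
          rcases eq_or_lt_of_le hj with he | hlt
          · have h4 : j = t := Fin.ext (by omega)
            rw [h4, hτt]
          · exact hτ j (by omega)
      · -- splice both
        have hne2 : τ⁻¹ t ≠ t := by rw [← hbb]; exact hbt
        have hσ't : (σ * Equiv.swap b t) t = t := by
          rw [Equiv.Perm.mul_apply, Equiv.swap_apply_right, hb, σ.apply_inv_self]
        have hτ't : (τ * Equiv.swap b t) t = t := by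
          rw [Equiv.Perm.mul_apply, Equiv.swap_apply_right, hbb, τ.apply_inv_self]
        have hfix' : ∀ (ρ : Equiv.Perm (Fin n)), (∀ j, t < j → ρ j = j) →
            ((ρ * Equiv.swap b t) t = t) → ∀ j : Fin n, m ≤ (j : ℕ) →
            (ρ * Equiv.swap b t) j = j := by
          intro ρ hρ hρt j hj
          rcases eq_or_lt_of_le hj with he | hlt
          · have h4 : j = t := Fin.ext (by omega)
            rw [h4, hρt]
          · have hjt : t < j := by
              rw [Fin.lt_def, htv]; exact hlt
            have hne1 : j ≠ b := by
              intro he'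
              rw [he'] at hjt
              exact absurd hbσ (not_le.mpr hjt)
            have hswap : Equiv.swap b t j = j :=
              Equiv.swap_apply_of_ne_of_ne hne1 hjt.ne'
            rw [Equiv.Perm.mul_apply, hswap]
            exact hρ j hjt
        have hcode' : BcodeNat (σ * Equiv.swap b t) = BcodeNat (τ * Equiv.swap b t) := by
          rw [bcodeNat_eq_iff]
          intro i
          rcases lt_trichotomy i t with hit | hit | hit
          · have e1 : Bcode (σ * Equiv.swap (σ⁻¹ t) t) i = Bcode σ i :=
              bcode_splice σ t hfixσ hbt hit
            have e2 : Bcode (τ * Equiv.swap (τ⁻¹ t) t) i = Bcode τ i :=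
              bcode_splice τ t hfixτ hne2 hit
            rw [← hbb] at e2
            exact e1.trans ((bcodeNat_eq_iff.mp hcode i).trans e2.symm)
          · rw [hit, bcode_fix _ hσ't, bcode_fix _ hτ't]
          · rw [bcode_fix _ (hfix' σ hfixσ hσ't i (le_of_lt hit)),
              bcode_fix _ (hfix' τ hfixτ hτ't i (le_of_lt hit))]
        have hfin := ih (σ * Equiv.swap b t) (τ * Equiv.swap b t)
          (hfix' σ hfixσ hσ't) (hfix' τ hfixτ hτ't) hcode'
        calc σ = (σ * Equiv.swap b t) * Equiv.swap b t := by
              rw [mul_assoc, Equiv.swap_mul_self, mul_one]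
        _ = (τ * Equiv.swap b t) * Equiv.swap b t := by rw [hfin]
        _ = τ := by rw [mul_assoc, Equiv.swap_mul_self, mul_one]
    · exact ih σ τ (fun j hj => absurd j.isLt (by omega))
        (fun j hj => absurd j.isLt (by omega)) hcode

lemma bcodeNat_injective : Function.Injective (BcodeNat (n := n)) := by
  intro σ τ h
  exact bcodeNat_inj_aux n σ τ (fun j hj => absurd j.isLt (by omega))
    (fun j hj => absurd j.isLt (by omega)) h

end SortIdx
namespace SortIdx

variable {n : ℕ}

lemma lmap_iff_gcond_bcode_aux : ∀ m : ℕ, ∀ σ : Equiv.Perm (Fin n),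
    (∀ j : Fin n, m ≤ (j : ℕ) → σ j = j) →
    ∀ x, (x ∈ LmapSet σ ↔ Gcond (BcodeNat σ) x) := by
  intro m
  induction m with
  | zero =>
    intro σ hσ x
    have hone : ∀ i : Fin n, σ i = i := fun i => hσ i (Nat.zero_le _)
    have hc : ∀ i : Fin n, BcodeNat σ i = (i : ℕ) + 1 := fun i => by
      rw [BcodeNat, bcode_fix σ (hone i)]
    apply iff_of_true
    · rw [mem_LmapSet]
      intro j hj
      rw [hone j, hone x]
      exact hj
    · refine ⟨x, hc x, fun q hq => ?_⟩
      rw [hc q]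
      have := Fin.lt_def.mp hq
      omega
  | succ m ih =>
    intro σ hσ x
    by_cases hmn : m < n
    · set t : Fin n := ⟨m, hmn⟩ with ht
      have htv : (t : ℕ) = m := rfl
      have hfixσ : ∀ j, t < j → σ j = j := fun j hj => hσ j (by
        have h1 := Fin.lt_def.mp hj
        omega)
      have hb_le : σ⁻¹ t ≤ t := inv_fix_above_maps_le hfixσ le_rfl
      set b := σ⁻¹ t with hb
      have hσb : σ b = t := σ.apply_inv_self t
      have hct : BcodeNat σ t = (b : ℕ) + 1 := by
        rw [BcodeNat, bcode_eq_of_inv_le σ t hb_le]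
      have hcq : ∀ q : Fin n, t < q → BcodeNat σ q = (q : ℕ) + 1 := fun q hq => by
        rw [BcodeNat, bcode_fix σ (hfixσ q hq)]
      have hmapIic : ∀ j, j ≤ t → σ j ≤ t := fun j hj => fix_above_maps_le hfixσ hj
      rcases lt_trichotomy x t with hxt | hxt | hxt
      · -- x < t
        rcases eq_or_lt_of_le hb_le with hbt | hbt
        · -- b = t : σ fixes t too, direct IH
          have hσt : σ t = t := by rw [hbt] at hσb; exact hσb
          refine ih σ (fun j hj => ?_) x
          rcases eq_or_lt_of_le hj with he | hlt
          · have h4 : j = t := Fin.ext (by omega)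
            rw [h4, hσt]
          · exact hσ j (by omega)
        · -- b < t : splice
          set σ' := σ * Equiv.swap b t with hσ'def
          have hσ't : σ' t = t := by
            rw [hσ'def, Equiv.Perm.mul_apply, Equiv.swap_apply_right]
            exact hσb
          have hσ'j : ∀ j, j ≠ b → j ≠ t → σ' j = σ j := fun j h1 h2 => by
            rw [hσ'def, Equiv.Perm.mul_apply, Equiv.swap_apply_of_ne_of_ne h1 h2]
          have hfixσ' : ∀ j : Fin n, m ≤ (j : ℕ) → σ' j = j := by
            intro j hj
            rcases eq_or_lt_of_le hj with he | hlt
            · have h4 : j = t := Fin.ext (by omega)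
              rw [h4, hσ't]
            · have hjt : t < j := by rw [Fin.lt_def, htv]; exact hlt
              rw [hσ'j j (fun he' => absurd hb_le (not_le.mpr (he' ▸ hjt))) hjt.ne']
              exact hfixσ j hjt
          have hc'lt : ∀ i : Fin n, i < t → BcodeNat σ' i = BcodeNat σ i := fun i hi => by
            rw [BcodeNat, BcodeNat, hσ'def, bcode_splice σ t hfixσ (ne_of_lt hbt) hi]
          have hc't : BcodeNat σ' t = (t : ℕ) + 1 := by
            rw [BcodeNat, bcode_fix σ' hσ't]
          have hc'q : ∀ q : Fin n, t < q → BcodeNat σ' q = (q : ℕ) + 1 := fun q hq => by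
            rw [BcodeNat, bcode_fix σ' (hfixσ' q (by
              have := Fin.lt_def.mp hq
              omega))]
          rcases lt_trichotomy x b with hxb | hxb | hxb
          · -- x < b : transfer everything through σ'
            have hlm : (x ∈ LmapSet σ) ↔ (x ∈ LmapSet σ') := by
              rw [mem_LmapSet, mem_LmapSet]
              have hval : ∀ j : Fin n, j ≤ x → σ' j = σ j := fun j hj =>
                hσ'j j (ne_of_lt (lt_of_le_of_lt hj hxb))
                  (ne_of_lt (lt_of_le_of_lt hj hxt))
              constructor
              · intro h j hj
                rw [hval j hj.le, hval x le_rfl]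
                exact h j hj
              · intro h j hj
                rw [← hval j hj.le, ← hval x le_rfl]
                exact h j hj
            have hgc : Gcond (BcodeNat σ) x ↔ Gcond (BcodeNat σ') x := by
              have hxbv := Fin.lt_def.mp hxb
              have hxtv := Fin.lt_def.mp hxt
              have hbtv := Fin.lt_def.mp hbt
              constructor
              · rintro ⟨p, hp, hr⟩
                have hpt : p < t := by
                  rcases lt_trichotomy p t with h | h | h
                  · exact h
                  · exfalso; rw [h, hct] at hp; omega
                  · exfalso
                    rw [hcq p h] at hp
                    have := Fin.lt_def.mp h
                    omega
                refine ⟨p, by rw [hc'lt p hpt]; exact hp, fun q hq => ?_⟩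
                rcases lt_trichotomy q t with h | h | h
                · rw [hc'lt q h]; exact hr q hq
                · rw [h, hc't]; omega
                · rw [hc'q q h]
                  have := Fin.lt_def.mp h
                  omega
              · rintro ⟨p, hp, hr⟩
                have hpt : p < t := by
                  rcases lt_trichotomy p t with h | h | h
                  · exact h
                  · exfalso; rw [h, hc't] at hp; omega
                  · exfalso
                    rw [hc'q p h] at hp
                    have := Fin.lt_def.mp h
                    omega
                rw [hc'lt p hpt] at hp
                refine ⟨p, hp, fun q hq => ?_⟩
                rcases lt_trichotomy q t with h | h | h
                · have h5 := hr q hq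
                  rw [hc'lt q h] at h5
                  exact h5
                · rw [h, hct]; omega
                · rw [hcq q h]
                  have := Fin.lt_def.mp h
                  omega
            rw [hlm, hgc]
            exact ih σ' hfixσ' x
          · -- x = b : both sides true
            apply iff_of_true
            · rw [mem_LmapSet]
              intro j hj
              have hσx : σ x = t := by rw [hxb]; exact hσb
              rw [hσx]
              refine lt_of_le_of_ne (hmapIic j (le_of_lt (lt_of_lt_of_le hj hxt.le))) ?_
              intro he
              have : j = b := σ.injective (he.trans hσb.symm)
              rw [← hxb] at this
              exact hj.ne this
            · refine ⟨t, by rw [hct, hxb], fun q hq => ?_⟩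
              rw [hcq q hq]
              have h1 := Fin.lt_def.mp hq
              have h2 := Fin.lt_def.mp hxt
              omega
          · -- b < x < t : both sides false
            have hxbv := Fin.lt_def.mp hxb
            have hxtv := Fin.lt_def.mp hxt
            apply iff_of_false
            · intro hmem
              have h1 := mem_LmapSet.mp hmem b hxb
              rw [hσb] at h1
              exact absurd (hmapIic x hxt.le) (not_le.mpr h1)
            · rintro ⟨p, hp, hr⟩
              rcases lt_trichotomy p t with h | h | h
              · have h2 := hr t h
                rw [hct] at h2
                omega
              · rw [h, hct] at hp
                omega
              · rw [hcq p h] at hp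
                have := Fin.lt_def.mp h
                omega
      · -- x = t
        rw [hxt]
        rcases eq_or_lt_of_le hb_le with hbt | hbt
        · -- b = t : both true
          have hσt : σ t = t := by rw [hbt] at hσb; exact hσb
          apply iff_of_true
          · rw [mem_LmapSet]
            intro j hj
            rw [hσt]
            exact lt_of_le_of_ne (hmapIic j hj.le)
              (fun he => hj.ne (σ.injective (he.trans hσt.symm)))
          · refine ⟨t, by rw [hct, hbt], fun q hq => ?_⟩
            rw [hcq q hq]
            exact Nat.succ_lt_succ (Fin.lt_def.mp hq)
        · -- b < t : both false
          have hbtv := Fin.lt_def.mp hbt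
          apply iff_of_false
          · intro hmem
            have h1 := mem_LmapSet.mp hmem b hbt
            rw [hσb] at h1
            exact absurd (hmapIic t le_rfl) (not_le.mpr h1)
          · rintro ⟨p, hp, hr⟩
            rcases lt_trichotomy p t with h | h | h
            · have h2 := hr t h
              rw [hct] at h2
              omega
            · rw [h, hct] at hp
              omega
            · rw [hcq p h] at hp
              have := Fin.lt_def.mp h
              omega
      · -- t < x : both true
        have hσx : σ x = x := hfixσ x hxt
        apply iff_of_true
        · rw [mem_LmapSet]
          intro j hj
          rcases le_or_gt j t with hjt | hjt
          · rw [hσx]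
            exact lt_of_le_of_lt (hmapIic j hjt) hxt
          · rw [hσx, hfixσ j hjt]
            exact hj
        · refine ⟨x, hcq x hxt, fun q hq => ?_⟩
          rw [hcq q (lt_trans hxt hq)]
          exact Nat.succ_lt_succ (Fin.lt_def.mp hq)
    · exact ih σ (fun j hj => absurd j.isLt (by omega)) x

lemma lmap_iff_gcond_bcode {σ : Equiv.Perm (Fin n)} {x : Fin n} :
    x ∈ LmapSet σ ↔ Gcond (BcodeNat σ) x :=
  lmap_iff_gcond_bcode_aux n σ (fun j hj => absurd j.isLt (by omega)) x

end SortIdx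
namespace SortIdx

variable {n : ℕ}

lemma leh_injective : Function.Injective (Leh (n := n)) := by
  intro π ρ h
  have key : ∀ i : Fin n, (∀ j, i < j → π j = ρ j) → π i = ρ i := by
    intro i hup
    set U := Finset.univ.filter (fun y : Fin n => π⁻¹ y ≤ i) with hU
    have hUρ : U = Finset.univ.filter (fun y : Fin n => ρ⁻¹ y ≤ i) := by
      rw [hU]
      ext y
      simp only [Finset.mem_filter, Finset.mem_univ, true_and]
      constructor
      · intro hy
        by_contra hc
        push_neg at hc
        have h1 : ρ (ρ⁻¹ y) = y := ρ.apply_inv_self y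
        rw [← hup _ hc] at h1
        have h2 : ρ⁻¹ y = π⁻¹ y := π.injective (h1.trans (π.apply_inv_self y).symm)
        rw [← h2] at hy
        exact absurd hy (not_le.mpr hc)
      · intro hy
        by_contra hc
        push_neg at hc
        have h1 : π (π⁻¹ y) = y := π.apply_inv_self y
        rw [hup _ hc] at h1
        have h2 : π⁻¹ y = ρ⁻¹ y := ρ.injective (h1.trans (ρ.apply_inv_self y).symm)
        rw [← h2] at hy
        exact absurd hy (not_le.mpr hc)
    have hrank : ∀ (g : Equiv.Perm (Fin n)),
        (Finset.univ.filter (fun y : Fin n => g⁻¹ y ≤ i)).filter (· ≤ g i) =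
        (Finset.univ.filter (fun j => j ≤ i ∧ g j ≤ g i)).image g := by
      intro g
      ext y
      simp only [Finset.mem_filter, Finset.mem_univ, true_and, Finset.mem_image]
      constructor
      · rintro ⟨h1, h2⟩
        exact ⟨g⁻¹ y, ⟨h1, by rwa [g.apply_inv_self]⟩, g.apply_inv_self y⟩
      · rintro ⟨j, ⟨hj1, hj2⟩, rfl⟩
        exact ⟨by rwa [Equiv.Perm.inv_apply_self], hj2⟩
    have hcard : (U.filter (· ≤ π i)).card = (U.filter (· ≤ ρ i)).card := by
      conv_lhs => rw [hU]
      conv_rhs => rw [hUρ]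
      rw [hrank π, hrank ρ,
        Finset.card_image_of_injective _ π.injective,
        Finset.card_image_of_injective _ ρ.injective]
      have h1 := congrFun h i
      rw [Leh, Leh] at h1
      exact h1
    have hπU : π i ∈ U := by rw [hU]; simp
    have hρU : ρ i ∈ U := by rw [hUρ]; simp
    have hmono : ∀ a b : Fin n, a ∈ U → b ∈ U → a < b →
        (U.filter (· ≤ a)).card < (U.filter (· ≤ b)).card := by
      intro a b _ hbU hab
      apply Finset.card_lt_card
      rw [Finset.ssubset_iff_of_subset]
      · exact ⟨b, Finset.mem_filter.mpr ⟨hbU, le_rfl⟩,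
          fun hc => absurd (Finset.mem_filter.mp hc).2 (not_le.mpr hab)⟩
      · intro y hy
        rw [Finset.mem_filter] at hy ⊢
        exact ⟨hy.1, le_trans hy.2 hab.le⟩
    rcases lt_trichotomy (π i) (ρ i) with hlt | heq | hlt
    · exact absurd hcard (ne_of_lt (hmono _ _ hπU hρU hlt))
    · exact heq
    · exact absurd hcard.symm (ne_of_lt (hmono _ _ hρU hπU hlt))
  have all : ∀ k : ℕ, ∀ i : Fin n, n - (i : ℕ) ≤ k → π i = ρ i := by
    intro k
    induction k with
    | zero => intro i hi; exact absurd i.isLt (by omega)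
    | succ k ihk =>
      intro i _
      apply key i
      intro j hj
      apply ihk j
      have := Fin.lt_def.mp hj
      have := j.isLt
      omega
  exact Equiv.ext fun i => all n i (by omega)

lemma acode_injective : Function.Injective (Acode (n := n)) := by
  intro σ τ h
  have : σ⁻¹ = τ⁻¹ := leh_injective h
  exact inv_injective this

end SortIdx
namespace SortIdx

variable {n : ℕ}

noncomputable section

/-- The A-code as a map into the code space `Π i, Fin (i+1)`. -/
def AFin (σ : Equiv.Perm (Fin n)) : Π i : Fin n, Fin ((i : ℕ) + 1) := fun i =>
  ⟨Acode σ i - 1, by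
    have h1 := acode_le σ i
    have h2 := acode_pos σ i
    omega⟩

/-- The B-code as a map into the code space `Π i, Fin (i+1)`. -/
def BFin (σ : Equiv.Perm (Fin n)) : Π i : Fin n, Fin ((i : ℕ) + 1) := fun i =>
  ⟨(Bcode σ i : ℕ), Nat.lt_succ_of_le (Fin.le_iff_val_le_val.mp (bcode_le σ i))⟩

lemma AFin_injective : Function.Injective (AFin (n := n)) := by
  intro σ τ h
  apply acode_injective
  funext i
  have h1 := congrFun h i
  rw [AFin, AFin] at h1
  have h2 := Fin.val_eq_val _ _ |>.mpr h1
  simp only at h2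
  have h3 := acode_pos σ i
  have h4 := acode_pos τ i
  omega

lemma BFin_injective : Function.Injective (BFin (n := n)) := by
  intro σ τ h
  apply bcodeNat_injective
  funext i
  have h1 := congrFun h i
  rw [BFin, BFin] at h1
  have h2 := Fin.val_eq_val _ _ |>.mpr h1
  simp only at h2
  rw [BcodeNat, BcodeNat, h2]

lemma card_codeSpace :
    Fintype.card (Π i : Fin n, Fin ((i : ℕ) + 1)) = Fintype.card (Equiv.Perm (Fin n)) := by
  rw [Fintype.card_pi, Fintype.card_perm, Fintype.card_fin]
  have h1 : ∀ m : ℕ, (∏ i ∈ Finset.range m, (i + 1)) = Nat.factorial m := by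
    intro m
    induction m with
    | zero => simp
    | succ m ih =>
      rw [Finset.prod_range_succ, ih, Nat.factorial_succ]
      ring
  rw [← h1 n, ← Fin.prod_univ_eq_prod_range (fun i => i + 1) n]
  simp

lemma AFin_bijective : Function.Bijective (AFin (n := n)) :=
  (Fintype.bijective_iff_injective_and_card _).mpr ⟨AFin_injective, card_codeSpace.symm⟩

lemma BFin_bijective : Function.Bijective (BFin (n := n)) :=
  (Fintype.bijective_iff_injective_and_card _).mpr ⟨BFin_injective, card_codeSpace.symm⟩

/-- The Foata–Han bijection `ψ = B⁻¹ ∘ A`. -/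
def psi : Equiv.Perm (Fin n) ≃ Equiv.Perm (Fin n) :=
  (Equiv.ofBijective _ AFin_bijective).trans (Equiv.ofBijective _ BFin_bijective).symm

lemma bcodeNat_psi (σ : Equiv.Perm (Fin n)) : BcodeNat (psi σ) = Acode σ := by
  have h0 : BFin (psi σ) = AFin σ := by
    have := (Equiv.ofBijective _ (BFin_bijective (n := n))).apply_symm_apply
      (Equiv.ofBijective _ AFin_bijective σ)
    exact this
  funext i
  have h1 := congrFun h0 i
  rw [BFin, AFin] at h1
  have h2 := Fin.val_eq_val _ _ |>.mpr h1
  simp only at h2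
  have h3 := acode_pos σ i
  rw [BcodeNat, h2]
  omega

lemma CycSet_psi (σ : Equiv.Perm (Fin n)) : CycSet (psi σ) = RmilSet σ := by
  ext i
  rw [mem_CycSet_iff_bcode, ← acode_eq_top_iff, ← bcodeNat_psi σ]
  rw [BcodeNat]
  constructor
  · intro h; rw [h]
  · intro h; exact Fin.ext (by omega)

lemma Lmic1Set_psi (σ : Equiv.Perm (Fin n)) : Lmic1Set (psi σ) = LmilSet σ := by
  ext i
  rw [Lmic1Set, Oset, Finset.mem_filter, bcodeNat_psi σ, ← acode_eq_one_iff]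
  simp

lemma LmapSet_psi (σ : Equiv.Perm (Fin n)) : LmapSet (psi σ) = LmapSet σ := by
  ext x
  rw [lmap_iff_gcond_bcode, bcodeNat_psi σ, ← lmap_iff_gcond_acode]

/-- Inversion as an equivalence of the permutation group. -/
def invEquiv : Equiv.Perm (Fin n) ≃ Equiv.Perm (Fin n) where
  toFun σ := σ⁻¹
  invFun σ := σ⁻¹
  left_inv σ := inv_inv σ
  right_inv σ := inv_inv σ

end

end SortIdx
/-- The triples of set-valued statistics
`(Rmil, Lmil, Lmap)`, `(Cyc, Lmic₁, Lmap)`, `(Lmap, Lmip, Rmil)` have the same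
joint distribution on `Sₙ`. -/
theorem triple_setvalued_equidistributed (n : ℕ) (S₁ S₂ S₃ : Finset (Fin n)) :
    (Nat.card {σ : Equiv.Perm (Fin n) //
        SortIdx.RmilSet σ = S₁ ∧ SortIdx.LmilSet σ = S₂ ∧ SortIdx.LmapSet σ = S₃} =
      Nat.card {σ : Equiv.Perm (Fin n) //
        SortIdx.CycSet σ = S₁ ∧ SortIdx.Lmic1Set σ = S₂ ∧ SortIdx.LmapSet σ = S₃}) ∧
    (Nat.card {σ : Equiv.Perm (Fin n) //
        SortIdx.CycSet σ = S₁ ∧ SortIdx.Lmic1Set σ = S₂ ∧ SortIdx.LmapSet σ = S₃} =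
      Nat.card {σ : Equiv.Perm (Fin n) //
        SortIdx.LmapSet σ = S₁ ∧ SortIdx.LmipSet σ = S₂ ∧ SortIdx.RmilSet σ = S₃}) := by
  have h12 :
      Nat.card {σ : Equiv.Perm (Fin n) //
        SortIdx.RmilSet σ = S₁ ∧ SortIdx.LmilSet σ = S₂ ∧ SortIdx.LmapSet σ = S₃} =
      Nat.card {σ : Equiv.Perm (Fin n) //
        SortIdx.CycSet σ = S₁ ∧ SortIdx.Lmic1Set σ = S₂ ∧ SortIdx.LmapSet σ = S₃} := by
    apply Nat.card_congr
    apply Equiv.subtypeEquiv SortIdx.psi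
    intro σ
    rw [SortIdx.CycSet_psi, SortIdx.Lmic1Set_psi, SortIdx.LmapSet_psi]
  have h31 :
      Nat.card {σ : Equiv.Perm (Fin n) //
        SortIdx.LmapSet σ = S₁ ∧ SortIdx.LmipSet σ = S₂ ∧ SortIdx.RmilSet σ = S₃} =
      Nat.card {σ : Equiv.Perm (Fin n) //
        SortIdx.RmilSet σ = S₁ ∧ SortIdx.LmilSet σ = S₂ ∧ SortIdx.LmapSet σ = S₃} := by
    apply Nat.card_congr
    apply Equiv.subtypeEquiv SortIdx.invEquiv
    intro σ
    show _ ↔ (SortIdx.RmilSet σ⁻¹ = S₁ ∧ SortIdx.LmilSet σ⁻¹ = S₂ ∧ SortIdx.LmapSet σ⁻¹ = S₃)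
    rw [SortIdx.RmilSet_inv, SortIdx.LmilSet_inv, SortIdx.LmapSet_inv]
  exact ⟨h12, h12.symm.trans h31.symm⟩
end
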